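/- Let ξ, X, η be independent random variables, each exponentially distributed with rate 1. Then the random variable (ξ + X)·e^{−η} is exponentially distributed with rate 1. -/

import Mathlib

open scoped ENNReal NNReal
open MeasureTheory ProbabilityTheory Real Set Filter Topology

namespace Stmt7Aux

lemma expIic (s : ℝ) : expMeasure 1 (Iic s)
    = ENNReal.ofReal (if 0 ≤ s then 1 - Real.exp (-s) else 0) := by
  rw [expMeasure, gammaMeasure, withDensity_apply _ measurableSet_Iic]
  have h : gammaPDF 1 1 = exponentialPDF 1 := rfl
  rw [h]
  simpa using lintegral_exponentialPDF_eq_antiDeriv one_pos s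

lemma lint_exp (f : ℝ → ℝ≥0∞) (hf : Measurable f) :
    ∫⁻ x, f x ∂(expMeasure 1) = ∫⁻ x in Ioi 0, ENNReal.ofReal (Real.exp (-x)) * f x := by
  have hgp : gammaPDF 1 1 = fun x => ENNReal.ofReal (gammaPDFReal 1 1 x) := rfl
  rw [expMeasure, gammaMeasure, hgp,
    lintegral_withDensity_eq_lintegral_mul _ ((measurable_gammaPDFReal 1 1).ennreal_ofReal) hf]
  simp only [Pi.mul_apply]
  rw [← lintegral_add_compl (f := fun x => ENNReal.ofReal (gammaPDFReal 1 1 x) * f x) (μ := volume) (measurableSet_Iio (a := (0:ℝ)))]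
  have h0 : ∫⁻ x in Iio 0, ENNReal.ofReal (gammaPDFReal 1 1 x) * f x = 0 := by
    rw [setLIntegral_congr_fun measurableSet_Iio
      (fun x (hx : x < 0) => by
        rw [show ENNReal.ofReal (gammaPDFReal 1 1 x) = gammaPDF 1 1 x from rfl,
          gammaPDF_of_neg hx, zero_mul])]
    simp
  rw [h0, zero_add, compl_Iio]
  rw [← MeasureTheory.setLIntegral_congr (Ioi_ae_eq_Ici (a := (0:ℝ))).symm]
  refine setLIntegral_congr_fun measurableSet_Ici (fun x hx => ?_)
  have hx0 : (0:ℝ) ≤ x := hx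
  rw [show ENNReal.ofReal (gammaPDFReal 1 1 x) = exponentialPDF 1 x from rfl,
    exponentialPDF_of_nonneg hx0]
  norm_num

end Stmt7Aux

namespace Stmt7Aux2
open Stmt7Aux

instance : IsProbabilityMeasure (expMeasure 1) := isProbabilityMeasure_expMeasure one_pos

lemma ofReal_setIntegral {s : Set ℝ} (hs : MeasurableSet s) (g : ℝ → ℝ)
    (hg : IntegrableOn g s) (hnn : ∀ x ∈ s, 0 ≤ g x) :
    ∫⁻ x in s, ENNReal.ofReal (g x) = ENNReal.ofReal (∫ x in s, g x) :=
  (ofReal_integral_eq_lintegral_ofReal hg ((ae_restrict_iff' hs).2 (ae_of_all _ hnn))).symm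

lemma real_int_sum (s : ℝ) (hs : 0 ≤ s) :
    ∫ x in Ioc 0 s, Real.exp (-x) * (1 - Real.exp (-(s - x)))
      = 1 - Real.exp (-s) - s * Real.exp (-s) := by
  rw [← intervalIntegral.integral_of_le hs]
  have h : ∀ x : ℝ, Real.exp (-x) * (1 - Real.exp (-(s - x)))
      = Real.exp (-x) - Real.exp (-s) := by
    intro x
    rw [mul_sub, mul_one, ← Real.exp_add]
    ring_nf
  simp_rw [h]
  rw [intervalIntegral.integral_sub
    ((by fun_prop : Continuous fun x : ℝ => Real.exp (-x)).intervalIntegrable 0 s)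
    intervalIntegrable_const]
  rw [intervalIntegral.integral_comp_neg (fun x => Real.exp x)]
  rw [integral_exp]
  simp

noncomputable def νS : Measure ℝ :=
  Measure.map (fun p : ℝ × ℝ => p.1 + p.2) ((expMeasure 1).prod (expMeasure 1))

lemma sumIic (s : ℝ) : νS (Iic s)
    = ENNReal.ofReal (if 0 ≤ s then 1 - Real.exp (-s) - s * Real.exp (-s) else 0) := by
  have hadd : Measurable fun p : ℝ × ℝ => p.1 + p.2 := measurable_fst.add measurable_snd
  rw [νS, Measure.map_apply hadd measurableSet_Iic]
  have hprem : MeasurableSet ((fun p : ℝ × ℝ => p.1 + p.2) ⁻¹' Iic s) :=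
    hadd measurableSet_Iic
  rw [Measure.prod_apply hprem]
  have h1 : ∀ x : ℝ, (Prod.mk x ⁻¹' ((fun p : ℝ × ℝ => p.1 + p.2) ⁻¹' Iic s)) = Iic (s - x) := by
    intro x; ext y
    simp [le_sub_iff_add_le']
  simp only [h1, expIic]
  rw [lint_exp _ (Measurable.ennreal_ofReal (Measurable.ite
      (measurableSet_le measurable_const (by fun_prop)) (by fun_prop) measurable_const))]
  by_cases hs : 0 ≤ s
  · rw [if_pos hs]
    rw [show Ioi (0:ℝ) = Ioc 0 s ∪ Ioi s from (Ioc_union_Ioi_eq_Ioi hs).symm,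
      lintegral_union measurableSet_Ioi (Ioc_disjoint_Ioi le_rfl)]
    have h2 : ∫⁻ x in Ioi s, ENNReal.ofReal (Real.exp (-x)) *
        ENNReal.ofReal (if 0 ≤ s - x then 1 - Real.exp (-(s - x)) else 0) = 0 := by
      rw [setLIntegral_congr_fun measurableSet_Ioi (fun x (hx : s < x) => by
        rw [if_neg (by linarith), ENNReal.ofReal_zero, mul_zero])]
      simp
    rw [h2, add_zero]
    rw [setLIntegral_congr_fun measurableSet_Ioc (fun x hx => by
      rw [if_pos (by linarith [hx.2]), ← ENNReal.ofReal_mul (Real.exp_nonneg _)])]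
    rw [ofReal_setIntegral measurableSet_Ioc _
      ((by fun_prop : Continuous fun x : ℝ =>
        Real.exp (-x) * (1 - Real.exp (-(s - x))))).integrableOn_Ioc
      (fun x hx => mul_nonneg (Real.exp_nonneg _)
        (by simp only [sub_nonneg]; exact Real.exp_le_one_iff.2 (by linarith [hx.2])))]
    rw [real_int_sum s hs]
  · rw [if_neg hs]
    rw [setLIntegral_congr_fun measurableSet_Ioi (fun x (hx : 0 < x) => by
      rw [if_neg (by linarith), ENNReal.ofReal_zero, mul_zero])]
    simp

end Stmt7Aux2

namespace Stmt7Aux3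
open Stmt7Aux Stmt7Aux2

lemma final_real_int (t : ℝ) (ht : 0 ≤ t) :
    ∫ z in Ioi (0:ℝ), Real.exp (-z) * (1 - Real.exp (-(t * Real.exp z))
      - t * Real.exp z * Real.exp (-(t * Real.exp z))) = 1 - Real.exp (-t) := by
  set φ : ℝ → ℝ := fun z => Real.exp (-z) * (1 - Real.exp (-(t * Real.exp z))
      - t * Real.exp z * Real.exp (-(t * Real.exp z))) with hφ
  set G : ℝ → ℝ := fun z => -Real.exp (-z) + Real.exp (-(t * Real.exp z) - z) with hG
  have hderiv : ∀ z : ℝ, HasDerivAt G (φ z) z := by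
    intro z
    have h1 : HasDerivAt (fun z : ℝ => -(t * Real.exp z) - z)
        (-(t * Real.exp z) - 1) z := by
      exact (((Real.hasDerivAt_exp z).const_mul t).neg.sub (hasDerivAt_id' z))
    have h2 : HasDerivAt (fun z : ℝ => Real.exp (-(t * Real.exp z) - z))
        (Real.exp (-(t * Real.exp z) - z) * (-(t * Real.exp z) - 1)) z := h1.exp
    have h3 : HasDerivAt (fun z : ℝ => -Real.exp (-z)) (Real.exp (-z)) z := by
      exact ((hasDerivAt_id' z).neg.exp).neg.congr_deriv (by simp only [Pi.neg_apply, mul_neg, mul_one, neg_neg])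
    have h4 := h3.add h2
    refine h4.congr_deriv ?_
    rw [hφ, show -(t * Real.exp z) - z = -(t * Real.exp z) + -z by ring, Real.exp_add]
    ring
  have hbound : ∀ z : ℝ, 0 ≤ z → 0 ≤ φ z ∧ φ z ≤ Real.exp (-z) := by
    intro z hz
    have hs : 0 ≤ t * Real.exp z := mul_nonneg ht (Real.exp_pos z).le
    have hkey : (1 + t * Real.exp z) * Real.exp (-(t * Real.exp z)) ≤ 1 := by
      rw [Real.exp_neg]
      rw [mul_inv_le_iff₀ (Real.exp_pos _), one_mul]
      linarith [Real.add_one_le_exp (t * Real.exp z)]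
    constructor
    · apply mul_nonneg (Real.exp_nonneg _)
      nlinarith [hkey]
    · have hc : 1 - Real.exp (-(t * Real.exp z))
          - t * Real.exp z * Real.exp (-(t * Real.exp z)) ≤ 1 := by
        nlinarith [Real.exp_nonneg (-(t * Real.exp z)),
          mul_nonneg hs (Real.exp_nonneg (-(t * Real.exp z)))]
      calc φ z ≤ Real.exp (-z) * 1 := mul_le_mul_of_nonneg_left hc (Real.exp_nonneg _)
        _ = Real.exp (-z) := mul_one _
  have hint : IntegrableOn φ (Ioi 0) := by
    have hexp : IntegrableOn (fun z : ℝ => Real.exp (-z)) (Ioi 0) := by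
      simpa using exp_neg_integrableOn_Ioi 0 one_pos
    refine Integrable.mono hexp ?_ ?_
    · exact ((by fun_prop : Continuous φ)).aestronglyMeasurable.restrict
    · refine (ae_restrict_iff' measurableSet_Ioi).2 (ae_of_all _ (fun z hz => ?_))
      have := hbound z (le_of_lt hz)
      rw [Real.norm_eq_abs, Real.norm_eq_abs, abs_of_nonneg this.1,
        abs_of_nonneg (Real.exp_nonneg _)]
      exact this.2
  have htend : Tendsto G atTop (𝓝 0) := by
    have t1 : Tendsto (fun z : ℝ => -Real.exp (-z)) atTop (𝓝 0) := by
      simpa using (Real.tendsto_exp_neg_atTop_nhds_zero).neg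
    have t2 : Tendsto (fun z : ℝ => Real.exp (-(t * Real.exp z) - z)) atTop (𝓝 0) := by
      apply squeeze_zero (fun z => (Real.exp_nonneg _))
        (fun z => ?_) Real.tendsto_exp_neg_atTop_nhds_zero
      exact Real.exp_le_exp.2 (by nlinarith [Real.exp_pos z, mul_nonneg ht (Real.exp_pos z).le])
    simpa using t1.add t2
  have := integral_Ioi_of_hasDerivAt_of_tendsto' (f := G) (f' := φ) (a := 0)
    (fun z _ => hderiv z) hint htend
  rw [this, hG]
  simp [Real.exp_neg]
  ring

end Stmt7Aux3

namespace Stmt7Aux4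
open Stmt7Aux Stmt7Aux2 Stmt7Aux3

lemma phi_props (t : ℝ) (ht : 0 ≤ t) :
    IntegrableOn (fun z => Real.exp (-z) * (1 - Real.exp (-(t * Real.exp z))
      - t * Real.exp z * Real.exp (-(t * Real.exp z)))) (Ioi 0) ∧
    ∀ z ∈ Ioi (0:ℝ), 0 ≤ Real.exp (-z) * (1 - Real.exp (-(t * Real.exp z))
      - t * Real.exp z * Real.exp (-(t * Real.exp z))) := by
  set φ : ℝ → ℝ := fun z => Real.exp (-z) * (1 - Real.exp (-(t * Real.exp z))
      - t * Real.exp z * Real.exp (-(t * Real.exp z))) with hφ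
  have hbound : ∀ z : ℝ, 0 ≤ φ z ∧ φ z ≤ Real.exp (-z) := by
    intro z
    have hs : 0 ≤ t * Real.exp z := mul_nonneg ht (Real.exp_pos z).le
    have hkey : (1 + t * Real.exp z) * Real.exp (-(t * Real.exp z)) ≤ 1 := by
      rw [Real.exp_neg]
      rw [mul_inv_le_iff₀ (Real.exp_pos _), one_mul]
      linarith [Real.add_one_le_exp (t * Real.exp z)]
    constructor
    · apply mul_nonneg (Real.exp_nonneg _)
      nlinarith [hkey]
    · have hc : 1 - Real.exp (-(t * Real.exp z))
          - t * Real.exp z * Real.exp (-(t * Real.exp z)) ≤ 1 := by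
        nlinarith [Real.exp_nonneg (-(t * Real.exp z)),
          mul_nonneg hs (Real.exp_nonneg (-(t * Real.exp z)))]
      calc φ z ≤ Real.exp (-z) * 1 := mul_le_mul_of_nonneg_left hc (Real.exp_nonneg _)
        _ = Real.exp (-z) := mul_one _
  refine ⟨?_, fun z _ => (hbound z).1⟩
  have hexp : IntegrableOn (fun z : ℝ => Real.exp (-z)) (Ioi 0) := by
    simpa using exp_neg_integrableOn_Ioi 0 one_pos
  refine Integrable.mono hexp ?_ ?_
  · exact ((by fun_prop : Continuous φ)).aestronglyMeasurable.restrict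
  · refine (ae_restrict_iff' measurableSet_Ioi).2 (ae_of_all _ (fun z hz => ?_))
    have := hbound z
    rw [Real.norm_eq_abs, Real.norm_eq_abs, abs_of_nonneg this.1,
      abs_of_nonneg (Real.exp_nonneg _)]
    exact this.2

lemma main_lint (t : ℝ) :
    ∫⁻ z, νS (Iic (t * Real.exp z)) ∂(expMeasure 1) = expMeasure 1 (Iic t) := by
  simp only [sumIic]
  rw [lint_exp _ (Measurable.ennreal_ofReal (Measurable.ite
    (measurableSet_le measurable_const (by fun_prop)) (by fun_prop) measurable_const))]
  by_cases ht : 0 ≤ t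
  · rw [setLIntegral_congr_fun measurableSet_Ioi (fun z (hz : 0 < z) => by
      rw [if_pos (mul_nonneg ht (Real.exp_pos z).le),
        ← ENNReal.ofReal_mul (Real.exp_nonneg _)])]
    rw [ofReal_setIntegral measurableSet_Ioi _ (phi_props t ht).1 (phi_props t ht).2]
    rw [final_real_int t ht, expIic, if_pos ht]
  · rw [setLIntegral_congr_fun measurableSet_Ioi (fun z (hz : 0 < z) => by
      rw [if_neg (not_le.2 (mul_neg_of_neg_of_pos (not_le.1 ht) (Real.exp_pos z))),
        ENNReal.ofReal_zero, mul_zero])]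
    simp [expIic, if_neg ht]

end Stmt7Aux4

open Stmt7Aux Stmt7Aux2 Stmt7Aux3 Stmt7Aux4

instance : IsProbabilityMeasure Stmt7Aux2.νS :=
  Measure.isProbabilityMeasure_map (measurable_fst.add measurable_snd).aemeasurable


/-- Invariance of `Exp(1)` (Proposition 4.3): if `ξ, X, η` are independent `Exp(1)`
random variables, then `(ξ + X)·e^{-η}` is `Exp(1)` distributed. -/
theorem stmt_7 {Ω : Type*} [MeasurableSpace Ω] (P : Measure Ω) [IsProbabilityMeasure P]
    (ξ X η : Ω → ℝ) (hξ : Measurable ξ) (hX : Measurable X) (hη : Measurable η)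
    (hindep : iIndepFun ![ξ, X, η] P)
    (hξd : Measure.map ξ P = expMeasure 1)
    (hXd : Measure.map X P = expMeasure 1)
    (hηd : Measure.map η P = expMeasure 1) :
    Measure.map (fun ω => (ξ ω + X ω) * Real.exp (-η ω)) P = expMeasure 1 := by
  have hmeas : ∀ i, Measurable (![ξ, X, η] i) := by
    intro i; fin_cases i <;> simpa
  have hIξX : IndepFun ξ X P := by
    simpa using hindep.indepFun (show (0 : Fin 3) ≠ 1 by decide)
  have hpair : Measure.map (fun ω => (ξ ω, X ω)) P = (expMeasure 1).prod (expMeasure 1) := by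
    exact ((indepFun_iff_map_prod_eq_prod_map_map hξ.aemeasurable hX.aemeasurable).1
      hIξX).trans (by rw [hξd, hXd])
  have hSmeas : Measurable fun ω => ξ ω + X ω := hξ.add hX
  have hSd : Measure.map (fun ω => ξ ω + X ω) P = Stmt7Aux2.νS := by
    rw [Stmt7Aux2.νS, ← hpair,
      Measure.map_map (show Measurable fun p : ℝ × ℝ => p.1 + p.2 from measurable_fst.add measurable_snd) (hξ.prodMk hX)]
    rfl
  have hIseta : IndepFun (fun ω => ξ ω + X ω) η P := by
    have h2 : IndepFun (fun ω => (ξ ω, X ω)) η P := by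
      simpa using hindep.indepFun_prodMk hmeas 0 1 2 (by decide) (by decide)
    exact h2.comp (measurable_fst.add measurable_snd) measurable_id
  have hjoint : Measure.map (fun ω => (η ω, ξ ω + X ω)) P
      = (expMeasure 1).prod Stmt7Aux2.νS := by
    exact ((indepFun_iff_map_prod_eq_prod_map_map hη.aemeasurable
      hSmeas.aemeasurable).1 hIseta.symm).trans (by rw [hηd, hSd])
  have hg : Measurable fun p : ℝ × ℝ => p.2 * Real.exp (-p.1) := by fun_prop
  have hmapU : Measure.map (fun ω => (ξ ω + X ω) * Real.exp (-η ω)) P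
      = Measure.map (fun p : ℝ × ℝ => p.2 * Real.exp (-p.1))
        ((expMeasure 1).prod Stmt7Aux2.νS) := by
    rw [← hjoint, Measure.map_map hg (hη.prodMk hSmeas)]
    rfl
  haveI : IsProbabilityMeasure (Measure.map (fun ω => (ξ ω + X ω) * Real.exp (-η ω)) P) :=
    Measure.isProbabilityMeasure_map
      ((by fun_prop : Measurable fun ω => (ξ ω + X ω) * Real.exp (-η ω))).aemeasurable
  refine Measure.ext_of_Iic _ _ (fun t => ?_)
  rw [hmapU, Measure.map_apply hg measurableSet_Iic,
    Measure.prod_apply (hg measurableSet_Iic)]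
  have hIic : ∀ z : ℝ,
      (Prod.mk z ⁻¹' ((fun p : ℝ × ℝ => p.2 * Real.exp (-p.1)) ⁻¹' Iic t))
        = Iic (t * Real.exp z) := by
    intro z; ext s2
    simp only [mem_preimage, mem_Iic]
    rw [Real.exp_neg, mul_inv_le_iff₀ (Real.exp_pos z)]
  simp only [hIic]
  exact main_lint t
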